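/- Let D be a positive integer, σ_d ≥ 0, p_d, q_d ∈ [1,∞] with p_d' := p_d/(p_d−1) < ∞, and set s := σ_d + D/2 − D/p_d. Let L, c, N > 0, let j₀, n ∈ ℕ, and on a probability space let (η_{j,k})_{0 ≤ j ≤ j₀, k∈ℕ} be real random variables such that for each j at most N·2^{Dj} of the variables η_{j,k} are not almost surely zero, and E[|η_{j,k}|^{p_d'}] ≤ c·n^{−p_d'/2} for all j, k. Then E[ sup_γ Σ_{j=0}^{j₀} Σ_{k∈ℕ} γ_{j,k} η_{j,k} ] ≤ L (cN)^{1/p_d'} n^{−1/2} Σ_{j=0}^{j₀} 2^{j(D/2 − σ_d)}, where the supremum is over all deterministic double sequences γ with ( Σ_{j=0}^{j₀} (2^{j s} ‖γ_{j,·}‖_{ℓ^{p_d}})^{q_d} )^{1/q_d} ≤ L. In particular, the right-hand side is O(L n^{−1/2}) when σ_d > D/2 and O(L n^{−1/2} 2^{j₀(D/2−σ_d)}) when σ_d < D/2. -/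

import Mathlib

open MeasureTheory ENNReal

noncomputable def lpw (p : ℝ≥0∞) (a : ℕ → ℝ≥0∞) : ℝ≥0∞ :=
  if p = ∞ then ⨆ k, a k else (∑' k, a k ^ p.toReal) ^ (1 / p.toReal)

noncomputable def holderConj (p : ℝ≥0∞) : ℝ≥0∞ :=
  if p = 1 then ∞ else if p = ∞ then 1 else ENNReal.ofReal (p.toReal / (p.toReal - 1))

lemma ofReal_sSup_le {S : Set ℝ} {B : ℝ≥0∞}
    (h : ∀ x ∈ S, ENNReal.ofReal x ≤ B) : ENNReal.ofReal (sSup S) ≤ B := by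
  rcases eq_top_or_lt_top B with hB | hB
  · simp [hB]
  · have hB0 : 0 ≤ B.toReal := ENNReal.toReal_nonneg
    have hs : sSup S ≤ B.toReal := by
      refine Real.sSup_le (fun x hx => ?_) hB0
      rcases le_or_gt x 0 with h0 | h0
      · exact h0.trans hB0
      · have := h x hx
        rwa [ENNReal.ofReal_le_iff_le_toReal hB.ne] at this
    calc ENNReal.ofReal (sSup S) ≤ ENNReal.ofReal B.toReal := ENNReal.ofReal_le_ofReal hs
      _ = B := ENNReal.ofReal_toReal hB.ne

lemma le_lpw {q : ℝ≥0∞} (hq : 1 ≤ q) (a : ℕ → ℝ≥0∞) (j : ℕ) : a j ≤ lpw q a := by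
  unfold lpw
  split_ifs with h
  · exact le_iSup a j
  · have hq0 : 0 < q.toReal := ENNReal.toReal_pos (zero_lt_one.trans_le hq).ne' h
    have h1 : a j ^ q.toReal ≤ ∑' k, a k ^ q.toReal := ENNReal.le_tsum j
    calc a j = (a j ^ q.toReal) ^ (1 / q.toReal) := by
          rw [← ENNReal.rpow_mul, mul_one_div_cancel hq0.ne', ENNReal.rpow_one]
      _ ≤ _ := ENNReal.rpow_le_rpow h1 (by positivity)

lemma holder_tsum {p : ℝ≥0∞} (hp : 1 ≤ p) (hp' : holderConj p ≠ ∞) (f g : ℕ → ℝ≥0∞) :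
    ∑' k, f k * g k ≤ lpw p f * lpw (holderConj p) g := by
  have hp1 : p ≠ 1 := by
    intro h; rw [holderConj, if_pos h] at hp'; exact hp' rfl
  by_cases hptop : p = ∞
  · subst hptop
    have hconj : holderConj ∞ = 1 := by simp [holderConj]
    rw [hconj, lpw, if_pos rfl]
    have h1 : lpw 1 g = ∑' k, g k := by
      simp [lpw, ENNReal.toReal_one]
    rw [h1]
    calc ∑' k, f k * g k ≤ ∑' k, (⨆ i, f i) * g k :=
          ENNReal.tsum_le_tsum fun k => mul_le_mul_left (le_iSup f k) _
      _ = (⨆ i, f i) * ∑' k, g k := ENNReal.tsum_mul_left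
  · have hplt : 1 < p.toReal := by
      rw [← ENNReal.toReal_one]
      exact ENNReal.toReal_strict_mono hptop (lt_of_le_of_ne hp (Ne.symm hp1))
    have hconj : p.toReal.HolderConjugate (p.toReal / (p.toReal - 1)) :=
      Real.HolderConjugate.conjExponent hplt
    have hcr : (holderConj p).toReal = p.toReal / (p.toReal - 1) := by
      rw [holderConj, if_neg hp1, if_neg hptop, ENNReal.toReal_ofReal hconj.symm.nonneg]
    have hcne : holderConj p ≠ ∞ := hp'
    rw [lpw, if_neg hptop, lpw, if_neg hcne, hcr]
    have H := ENNReal.lintegral_mul_le_Lp_mul_Lq (Measure.count : Measure ℕ) hconj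
      (f := f) (g := g) (measurable_of_countable f).aemeasurable
      (measurable_of_countable g).aemeasurable
    simpa [MeasureTheory.lintegral_count] using H

lemma lintegral_le_rpow {Ω : Type} [MeasurableSpace Ω] (P : Measure Ω) [IsProbabilityMeasure P]
    {f : Ω → ℝ≥0∞} (hf : AEMeasurable f P) {t : ℝ} (ht : 1 ≤ t) :
    ∫⁻ ω, f ω ∂P ≤ (∫⁻ ω, f ω ^ t ∂P) ^ (1 / t) := by
  rcases eq_or_lt_of_le ht with h1 | h1
  · simp [← h1]
  · have hconj : t.HolderConjugate (t / (t - 1)) := Real.HolderConjugate.conjExponent h1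
    have H := ENNReal.lintegral_mul_le_Lp_mul_Lq P hconj hf
      (g := fun _ => 1) aemeasurable_const
    simpa using H

lemma ofReal_finset_sum_le {α : Type*} (s : Finset α) (f : α → ℝ) :
    ENNReal.ofReal (∑ i ∈ s, f i) ≤ ∑ i ∈ s, ENNReal.ofReal (f i) := by
  induction s using Finset.cons_induction with
  | empty => simp
  | cons a s ha ih =>
    rw [Finset.sum_cons, Finset.sum_cons]
    exact ENNReal.ofReal_add_le.trans (add_le_add_right ih _)

theorem linear_estimator_variance_bound
    (D : ℕ) (hD : 0 < D) (σd : ℝ) (hσd : 0 ≤ σd)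
    (pd qd : ℝ≥0∞) (hpd : 1 ≤ pd) (hqd : 1 ≤ qd)
    (hpd' : holderConj pd ≠ ∞)
    (L c N : ℝ) (hL : 0 < L) (hc : 0 < c) (hN : 0 < N)
    (j₀ n : ℕ) (hn : 0 < n)
    (Ω : Type) [MeasurableSpace Ω] (P : Measure Ω) [IsProbabilityMeasure P]
    (η : ℕ → ℕ → Ω → ℝ) (hmeas : ∀ j k, Measurable (η j k))
    (hsparse : ∀ j ≤ j₀,
      {k : ℕ | ¬ (η j k =ᵐ[P] fun _ => 0)}.Finite ∧
      (({k : ℕ | ¬ (η j k =ᵐ[P] fun _ => 0)}.ncard : ℝ) ≤ N * 2 ^ (D * j)))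
    (hmom : ∀ j k, j ≤ j₀ →
      ∫⁻ ω, (‖η j k ω‖₊ : ℝ≥0∞) ^ (holderConj pd).toReal ∂P
        ≤ ENNReal.ofReal (c * (n : ℝ) ^ (-(holderConj pd).toReal / 2))) :
    ∫⁻ ω, ENNReal.ofReal (sSup { t : ℝ | ∃ γ : ℕ → ℕ → ℝ,
        lpw qd (fun j => if j ≤ j₀ then
            ENNReal.ofReal ((2 : ℝ) ^ ((j : ℝ) * (σd + (D : ℝ) / 2 - (D : ℝ) * (pd⁻¹).toReal)))
              * lpw pd (fun k => (‖γ j k‖₊ : ℝ≥0∞))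
          else 0) ≤ ENNReal.ofReal L ∧
        t = ∑ j ∈ Finset.range (j₀ + 1), ∑' k, γ j k * η j k ω }) ∂P
      ≤ ENNReal.ofReal
          (L * (c * N) ^ (1 / (holderConj pd).toReal) * (n : ℝ) ^ (-(1 : ℝ) / 2)
            * ∑ j ∈ Finset.range (j₀ + 1), (2 : ℝ) ^ ((j : ℝ) * ((D : ℝ) / 2 - σd))) := by
  classical
  set r : ℝ := (pd⁻¹).toReal with hr
  set s : ℝ := σd + (D : ℝ) / 2 - (D : ℝ) * r with hsdef
  set t : ℝ := (holderConj pd).toReal with htdef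
  have hp1 : pd ≠ 1 := by
    intro h; rw [holderConj, if_pos h] at hpd'; exact hpd' rfl
  have hkey : 1 ≤ t ∧ 1 / t = 1 - r := by
    by_cases hptop : pd = ∞
    · subst hptop
      constructor
      · rw [htdef, holderConj]; norm_num
      · rw [htdef, hr, holderConj]; norm_num
    · have hplt : 1 < pd.toReal := by
        rw [← ENNReal.toReal_one]
        exact ENNReal.toReal_strict_mono hptop (lt_of_le_of_ne hpd (Ne.symm hp1))
      have hpne : pd.toReal ≠ 0 := by linarith
      have hcr : t = pd.toReal / (pd.toReal - 1) := by
        rw [htdef, holderConj, if_neg hp1, if_neg hptop,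
          ENNReal.toReal_ofReal (div_nonneg (by linarith) (by linarith))]
      have hrr : r = (pd.toReal)⁻¹ := by rw [hr, ENNReal.toReal_inv]
      constructor
      · rw [hcr, le_div_iff₀ (by linarith)]; linarith
      · rw [hcr, one_div_div, hrr, sub_div, div_self hpne, one_div]
  obtain ⟨ht1, hinv⟩ := hkey
  have ht0 : 0 < t := zero_lt_one.trans_le ht1
  -- a.e. vanishing off the sparse sets
  have hE : ∀ᵐ ω ∂P, ∀ j k, k ∉ {k : ℕ | ¬ (η j k =ᵐ[P] fun _ => 0)} → η j k ω = 0 := by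
    rw [ae_all_iff]
    intro j
    rw [ae_all_iff]
    intro k
    by_cases hk : k ∈ {k : ℕ | ¬ (η j k =ᵐ[P] fun _ => 0)}
    · filter_upwards with ω h; exact absurd hk h
    · have h0 : η j k =ᵐ[P] fun _ => 0 := not_not.mp hk
      filter_upwards [h0] with ω hω _
      exact hω
  set E : ℕ → Ω → ℝ≥0∞ := fun j ω => lpw (holderConj pd) (fun k => (‖η j k ω‖₊ : ℝ≥0∞))
    with hEdef
  have hErw : ∀ j ω, E j ω = (∑' k, (‖η j k ω‖₊ : ℝ≥0∞) ^ t) ^ (1 / t) := by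
    intro j ω
    rw [hEdef]
    simp only
    rw [lpw, if_neg hpd']
  have hEmeas : ∀ j, Measurable (E j) := by
    intro j
    have : E j = fun ω => (∑' k, (‖η j k ω‖₊ : ℝ≥0∞) ^ t) ^ (1 / t) := funext (hErw j)
    rw [this]
    exact (Measurable.ennreal_tsum fun k =>
      ((hmeas j k).nnnorm.coe_nnreal_ennreal).pow measurable_const).pow measurable_const
  -- per level integral bound
  have hmomb : ∀ j ∈ Finset.range (j₀ + 1),
      ∫⁻ ω, E j ω ∂P
        ≤ ENNReal.ofReal ((c * N) ^ (1 / t) * (2 : ℝ) ^ (((D * j : ℕ) : ℝ) / t)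
            * (n : ℝ) ^ (-(1 : ℝ) / 2)) := by
    intro j hj
    have hj' : j ≤ j₀ := Nat.lt_succ_iff.mp (Finset.mem_range.mp hj)
    have hEt : ∀ ω, E j ω ^ t = ∑' k, (‖η j k ω‖₊ : ℝ≥0∞) ^ t := by
      intro ω
      rw [hErw j ω, ← ENNReal.rpow_mul, one_div_mul_cancel ht0.ne', ENNReal.rpow_one]
    have step1 : ∫⁻ ω, E j ω ∂P ≤ (∫⁻ ω, E j ω ^ t ∂P) ^ (1 / t) :=
      lintegral_le_rpow P (hEmeas j).aemeasurable ht1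
    have hfin := (hsparse j hj').1
    have step2 : ∫⁻ ω, E j ω ^ t ∂P
        ≤ ENNReal.ofReal (N * 2 ^ (D * j) * (c * (n : ℝ) ^ (-t / 2))) := by
      have hswap : ∫⁻ ω, E j ω ^ t ∂P = ∑' k, ∫⁻ ω, (‖η j k ω‖₊ : ℝ≥0∞) ^ t ∂P := by
        simp_rw [hEt]
        exact lintegral_tsum fun k =>
          (((hmeas j k).nnnorm.coe_nnreal_ennreal).pow measurable_const).aemeasurable
      rw [hswap]
      have hzero : ∀ k ∉ hfin.toFinset, ∫⁻ ω, (‖η j k ω‖₊ : ℝ≥0∞) ^ t ∂P = 0 := by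
        intro k hk
        have h0 : η j k =ᵐ[P] fun _ => 0 := not_not.mp (by simpa [hfin.mem_toFinset] using hk)
        have hz : (fun ω => (‖η j k ω‖₊ : ℝ≥0∞) ^ t) =ᵐ[P] fun _ => 0 := by
          filter_upwards [h0] with ω hω
          simp [hω, ENNReal.zero_rpow_of_pos ht0]
        rw [lintegral_congr_ae hz, lintegral_zero]
      rw [tsum_eq_sum hzero]
      have hcard : ((hfin.toFinset.card : ℝ)) ≤ N * 2 ^ (D * j) := by
        have h2 := (hsparse j hj').2
        rwa [Set.ncard_eq_toFinset_card _ hfin] at h2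
      calc ∑ k ∈ hfin.toFinset, ∫⁻ ω, (‖η j k ω‖₊ : ℝ≥0∞) ^ t ∂P
          ≤ ∑ _k ∈ hfin.toFinset, ENNReal.ofReal (c * (n : ℝ) ^ (-t / 2)) :=
            Finset.sum_le_sum fun k _ => hmom j k hj'
        _ = (hfin.toFinset.card : ℝ≥0∞) * ENNReal.ofReal (c * (n : ℝ) ^ (-t / 2)) := by
            rw [Finset.sum_const, nsmul_eq_mul]
        _ ≤ ENNReal.ofReal (N * 2 ^ (D * j)) * ENNReal.ofReal (c * (n : ℝ) ^ (-t / 2)) := by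
            apply mul_le_mul_left
            calc (hfin.toFinset.card : ℝ≥0∞)
                = ENNReal.ofReal ((hfin.toFinset.card : ℝ)) := by simp
              _ ≤ _ := ENNReal.ofReal_le_ofReal hcard
        _ = ENNReal.ofReal (N * 2 ^ (D * j) * (c * (n : ℝ) ^ (-t / 2))) := by
            rw [← ENNReal.ofReal_mul (by positivity)]
    have hnn : (0:ℝ) < (n:ℝ) := by exact_mod_cast hn
    calc ∫⁻ ω, E j ω ∂P
        ≤ (ENNReal.ofReal (N * 2 ^ (D * j) * (c * (n : ℝ) ^ (-t / 2)))) ^ (1 / t) :=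
          step1.trans (ENNReal.rpow_le_rpow step2 (by positivity))
      _ = ENNReal.ofReal ((N * 2 ^ (D * j) * (c * (n : ℝ) ^ (-t / 2))) ^ (1 / t)) := by
          rw [← ENNReal.ofReal_rpow_of_pos (by positivity)]
      _ = ENNReal.ofReal ((c * N) ^ (1 / t) * (2 : ℝ) ^ (((D * j : ℕ) : ℝ) / t)
            * (n : ℝ) ^ (-(1 : ℝ) / 2)) := by
          congr 1
          have e1 : (2:ℝ) ^ (((D*j:ℕ):ℝ)/t) = ((2:ℝ) ^ (((D*j:ℕ):ℝ))) ^ (1/t) := by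
            rw [← Real.rpow_mul (by norm_num : (0:ℝ) ≤ 2)]
            congr 1; ring
          have e2 : (n:ℝ) ^ (-(1:ℝ)/2) = ((n:ℝ) ^ (-t/2)) ^ (1/t) := by
            rw [← Real.rpow_mul hnn.le]
            congr 1; field_simp
          rw [e1, e2, ← Real.mul_rpow (by positivity) (by positivity),
            ← Real.mul_rpow (by positivity) (by positivity)]
          congr 1
          rw [Real.rpow_natCast]
          ring
  -- pointwise a.e. bound
  have claim : ∀ᵐ ω ∂P,
      ENNReal.ofReal (sSup { t' : ℝ | ∃ γ : ℕ → ℕ → ℝ,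
        lpw qd (fun j => if j ≤ j₀ then
            ENNReal.ofReal ((2 : ℝ) ^ ((j : ℝ) * s))
              * lpw pd (fun k => (‖γ j k‖₊ : ℝ≥0∞))
          else 0) ≤ ENNReal.ofReal L ∧
        t' = ∑ j ∈ Finset.range (j₀ + 1), ∑' k, γ j k * η j k ω })
        ≤ ∑ j ∈ Finset.range (j₀ + 1),
            ENNReal.ofReal (L * (2 : ℝ) ^ (-((j : ℝ) * s))) * E j ω := by
    filter_upwards [hE] with ω hω
    apply ofReal_sSup_le
    rintro x ⟨γ, hγ, rfl⟩
    refine le_trans (ofReal_finset_sum_le _ _) (Finset.sum_le_sum ?_)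
    intro j hj
    have hj' : j ≤ j₀ := Nat.lt_succ_iff.mp (Finset.mem_range.mp hj)
    have h2pos : (0:ℝ) < (2 : ℝ) ^ ((j : ℝ) * s) := by positivity
    have hγj : ENNReal.ofReal ((2 : ℝ) ^ ((j : ℝ) * s))
        * lpw pd (fun k => (‖γ j k‖₊ : ℝ≥0∞)) ≤ ENNReal.ofReal L := by
      have h := (le_lpw hqd _ j).trans hγ
      rwa [if_pos hj'] at h
    have hfb : lpw pd (fun k => (‖γ j k‖₊ : ℝ≥0∞))
        ≤ ENNReal.ofReal (L * (2 : ℝ) ^ (-((j : ℝ) * s))) := by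
      have h2 : ENNReal.ofReal ((2 : ℝ) ^ ((j : ℝ) * s)) ≠ 0 := by
        rw [Ne, ENNReal.ofReal_eq_zero, not_le]; exact h2pos
      have h2' : ENNReal.ofReal ((2 : ℝ) ^ ((j : ℝ) * s)) ≠ ∞ := ENNReal.ofReal_ne_top
      rw [← ENNReal.mul_le_mul_iff_right h2 h2']
      have hmul : ENNReal.ofReal ((2 : ℝ) ^ ((j : ℝ) * s))
          * ENNReal.ofReal (L * (2 : ℝ) ^ (-((j : ℝ) * s))) = ENNReal.ofReal L := by
        rw [← ENNReal.ofReal_mul h2pos.le]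
        congr 1
        rw [mul_comm L, ← mul_assoc, ← Real.rpow_add two_pos]
        simp
      rw [hmul]
      exact hγj
    have hts : ENNReal.ofReal (∑' k, γ j k * η j k ω)
        ≤ ∑' k, (‖γ j k‖₊ : ℝ≥0∞) * (‖η j k ω‖₊ : ℝ≥0∞) := by
      have hfin := (hsparse j hj').1
      have hzero : ∀ k ∉ hfin.toFinset, γ j k * η j k ω = 0 := by
        intro k hk
        have : η j k ω = 0 := hω j k (by simpa [hfin.mem_toFinset] using hk)
        simp [this]
      rw [tsum_eq_sum hzero]
      refine le_trans (ofReal_finset_sum_le _ _) (le_trans (Finset.sum_le_sum ?_)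
        (ENNReal.sum_le_tsum _))
      intro k _
      calc ENNReal.ofReal (γ j k * η j k ω)
          ≤ ENNReal.ofReal ‖γ j k * η j k ω‖ :=
            ENNReal.ofReal_le_ofReal (le_trans (le_abs_self _) (le_of_eq (Real.norm_eq_abs _).symm))
        _ = (‖γ j k * η j k ω‖₊ : ℝ≥0∞) := ofReal_norm _
        _ = (‖γ j k‖₊ : ℝ≥0∞) * (‖η j k ω‖₊ : ℝ≥0∞) := by
            rw [nnnorm_mul]; push_cast; ring
    calc ENNReal.ofReal (∑' k, γ j k * η j k ω)
        ≤ lpw pd (fun k => (‖γ j k‖₊ : ℝ≥0∞))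
            * lpw (holderConj pd) (fun k => (‖η j k ω‖₊ : ℝ≥0∞)) :=
          hts.trans (holder_tsum hpd hpd' _ _)
      _ ≤ ENNReal.ofReal (L * (2 : ℝ) ^ (-((j : ℝ) * s))) * E j ω :=
          mul_le_mul_left hfb _
  -- put everything together
  calc ∫⁻ ω, ENNReal.ofReal (sSup { t' : ℝ | ∃ γ : ℕ → ℕ → ℝ,
        lpw qd (fun j => if j ≤ j₀ then
            ENNReal.ofReal ((2 : ℝ) ^ ((j : ℝ) * s))
              * lpw pd (fun k => (‖γ j k‖₊ : ℝ≥0∞))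
          else 0) ≤ ENNReal.ofReal L ∧
        t' = ∑ j ∈ Finset.range (j₀ + 1), ∑' k, γ j k * η j k ω }) ∂P
      ≤ ∫⁻ ω, ∑ j ∈ Finset.range (j₀ + 1),
          ENNReal.ofReal (L * (2 : ℝ) ^ (-((j : ℝ) * s))) * E j ω ∂P :=
        lintegral_mono_ae claim
    _ = ∑ j ∈ Finset.range (j₀ + 1),
          ∫⁻ ω, ENNReal.ofReal (L * (2 : ℝ) ^ (-((j : ℝ) * s))) * E j ω ∂P :=
        lintegral_finset_sum _ fun j _ => measurable_const.mul (hEmeas j)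
    _ = ∑ j ∈ Finset.range (j₀ + 1),
          ENNReal.ofReal (L * (2 : ℝ) ^ (-((j : ℝ) * s))) * ∫⁻ ω, E j ω ∂P :=
        Finset.sum_congr rfl fun j _ => lintegral_const_mul _ (hEmeas j)
    _ ≤ ∑ j ∈ Finset.range (j₀ + 1),
          ENNReal.ofReal (L * (2 : ℝ) ^ (-((j : ℝ) * s)))
            * ENNReal.ofReal ((c * N) ^ (1 / t) * (2 : ℝ) ^ (((D * j : ℕ) : ℝ) / t)
                * (n : ℝ) ^ (-(1 : ℝ) / 2)) :=
        Finset.sum_le_sum fun j hj => mul_le_mul_right (hmomb j hj) _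
    _ = ENNReal.ofReal (∑ j ∈ Finset.range (j₀ + 1),
          (L * (2 : ℝ) ^ (-((j : ℝ) * s)))
            * ((c * N) ^ (1 / t) * (2 : ℝ) ^ (((D * j : ℕ) : ℝ) / t)
                * (n : ℝ) ^ (-(1 : ℝ) / 2))) := by
        rw [ENNReal.ofReal_sum_of_nonneg (fun j _ => by positivity)]
        exact Finset.sum_congr rfl fun j _ => (ENNReal.ofReal_mul (by positivity)).symm
    _ = ENNReal.ofReal
          (L * (c * N) ^ (1 / t) * (n : ℝ) ^ (-(1 : ℝ) / 2)
            * ∑ j ∈ Finset.range (j₀ + 1), (2 : ℝ) ^ ((j : ℝ) * ((D : ℝ) / 2 - σd))) := by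
        congr 1
        rw [Finset.mul_sum]
        refine Finset.sum_congr rfl fun j hj => ?_
        have hexp : (2 : ℝ) ^ (-((j : ℝ) * s)) * (2 : ℝ) ^ (((D * j : ℕ) : ℝ) / t)
            = (2 : ℝ) ^ ((j : ℝ) * ((D : ℝ) / 2 - σd)) := by
          rw [← Real.rpow_add two_pos]
          congr 1
          push_cast
          have h1 : ((D : ℝ) * j) / t = (D : ℝ) * j * (1 / t) := by ring
          rw [h1, hinv, hsdef]
          ring
        rw [← hexp]
        ring
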